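/- Let f : [0,1] → ℝ be continuous and concave on [0,1], and let g, ĝ : [0,1] → [0,1] be non-increasing functions such that ∫₀¹ g(u) du = ∫₀¹ ĝ(u) du and ∫₀^t g(u) du ≥ ∫₀^t ĝ(u) du for every t ∈ [0,1]. Then ∫₀¹ f(g(u)) du ≤ ∫₀¹ f(ĝ(u)) du. -/

import Mathlib

noncomputable section

open Set MeasureTheory

namespace Stmt11Aux

/-- Slope comparison for concave functions: slopes over windows moving right decrease. -/
lemma slope_anti {f : ℝ → ℝ} (hf : ConcaveOn ℝ (Set.Icc (0:ℝ) 1) f)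
    {a b c d : ℝ} (ha : a ∈ Set.Icc (0:ℝ) 1) (hb : b ∈ Set.Icc (0:ℝ) 1)
    (hc : c ∈ Set.Icc (0:ℝ) 1) (hd : d ∈ Set.Icc (0:ℝ) 1)
    (hab : a < b) (hcd : c < d) (hac : a ≤ c) (hbd : b ≤ d) :
    (f d - f c) / (d - c) ≤ (f b - f a) / (b - a) := by
  have hconv : ConvexOn ℝ (Set.Icc (0:ℝ) 1) (-f) := hf.neg
  have had : a < d := lt_of_lt_of_le hab hbd
  have h1 : ((-f) b - (-f) a) / (b - a) ≤ ((-f) d - (-f) a) / (d - a) :=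
    hconv.secant_mono ha hb hd (ne_of_gt hab) (ne_of_gt had) hbd
  have h2 : ((-f) a - (-f) d) / (a - d) ≤ ((-f) c - (-f) d) / (c - d) :=
    hconv.secant_mono hd ha hc (ne_of_lt had) (ne_of_lt hcd) hac
  have e1 : ((-f) b - (-f) a) / (b - a) = -((f b - f a) / (b - a)) := by
    simp only [Pi.neg_apply]; ring
  have e2 : ((-f) d - (-f) a) / (d - a) = -((f d - f a) / (d - a)) := by
    simp only [Pi.neg_apply]; ring
  have e3 : ((-f) a - (-f) d) / (a - d) = -((f d - f a) / (d - a)) := by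
    simp only [Pi.neg_apply]
    rw [show a - d = -(d - a) by ring, div_neg]
    ring_nf
  have e4 : ((-f) c - (-f) d) / (c - d) = -((f d - f c) / (d - c)) := by
    simp only [Pi.neg_apply]
    rw [show c - d = -(d - c) by ring, div_neg]
    ring_nf
  rw [e1, e2] at h1
  rw [e3, e4] at h2
  have s1 : (f d - f a) / (d - a) ≤ (f b - f a) / (b - a) := by linarith
  have s2 : (f d - f c) / (d - c) ≤ (f d - f a) / (d - a) := by linarith
  linarith

/-- approximate supergradient of a concave function -/
def phi (f : ℝ → ℝ) (δ x : ℝ) : ℝ := (f (max x δ) - f (max x δ - δ)) / δ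

lemma phi_eq (f : ℝ → ℝ) (δ x : ℝ) : phi f δ x = (f (max x δ) - f (max x δ - δ)) / δ := rfl

lemma max_mem {δ x : ℝ} (hδ0 : 0 < δ) (hδ1 : δ ≤ 1) (hx : x ∈ Set.Icc (0:ℝ) 1) :
    max x δ ∈ Set.Icc (0:ℝ) 1 :=
  ⟨le_trans hδ0.le (le_max_right _ _), max_le hx.2 hδ1⟩

lemma max_sub_mem {δ x : ℝ} (hδ0 : 0 < δ) (hδ1 : δ ≤ 1) (hx : x ∈ Set.Icc (0:ℝ) 1) :
    max x δ - δ ∈ Set.Icc (0:ℝ) 1 :=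
  ⟨by simp [le_max_right], by
    have := (max_mem hδ0 hδ1 hx).2; linarith⟩

lemma phi_anti {f : ℝ → ℝ} (hf : ConcaveOn ℝ (Set.Icc (0:ℝ) 1) f)
    {δ : ℝ} (hδ0 : 0 < δ) (hδ1 : δ ≤ 1) :
    AntitoneOn (phi f δ) (Set.Icc (0:ℝ) 1) := by
  intro x hx y hy hxy
  have hmm : max x δ ≤ max y δ := max_le_max hxy le_rfl
  rcases eq_or_lt_of_le hmm with he | hlt
  · rw [phi_eq, phi_eq, he]
  · have h := slope_anti hf (max_sub_mem hδ0 hδ1 hx) (max_mem hδ0 hδ1 hx)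
      (max_sub_mem hδ0 hδ1 hy) (max_mem hδ0 hδ1 hy)
      (by linarith) (by linarith) (by linarith) hmm
    rw [phi_eq, phi_eq]
    have e : max x δ - (max x δ - δ) = δ := by ring
    have e' : max y δ - (max y δ - δ) = δ := by ring
    rw [e, e'] at h
    exact h

lemma phi_bound {f : ℝ → ℝ} {δ ε : ℝ} (hδ0 : 0 < δ) (hδ1 : δ ≤ 1)
    (hmod : ∀ p ∈ Set.Icc (0:ℝ) 1, ∀ q ∈ Set.Icc (0:ℝ) 1, |p - q| ≤ δ → |f p - f q| ≤ ε)
    {x : ℝ} (hx : x ∈ Set.Icc (0:ℝ) 1) : |phi f δ x| ≤ ε / δ := by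
  rw [phi_eq, abs_div, abs_of_pos hδ0]
  rw [div_le_div_iff_of_pos_right hδ0]
  refine hmod _ (max_mem hδ0 hδ1 hx) _ (max_sub_mem hδ0 hδ1 hx) ?_
  rw [show max x δ - (max x δ - δ) = δ by ring, abs_of_pos hδ0]

lemma phi_spec {f : ℝ → ℝ} (hf : ConcaveOn ℝ (Set.Icc (0:ℝ) 1) f)
    {δ ε : ℝ} (hδ0 : 0 < δ) (hδ1 : δ ≤ 1)
    (hmod : ∀ p ∈ Set.Icc (0:ℝ) 1, ∀ q ∈ Set.Icc (0:ℝ) 1, |p - q| ≤ δ → |f p - f q| ≤ ε)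
    {x y : ℝ} (hx : x ∈ Set.Icc (0:ℝ) 1) (hy : y ∈ Set.Icc (0:ℝ) 1) :
    f y ≤ f x + phi f δ x * (y - x) + 4 * ε := by
  set m := max x δ with hm
  have hmI : m ∈ Set.Icc (0:ℝ) 1 := max_mem hδ0 hδ1 hx
  have hmδI : m - δ ∈ Set.Icc (0:ℝ) 1 := max_sub_mem hδ0 hδ1 hx
  have hδm : δ ≤ m := le_max_right _ _
  have hεpos : 0 ≤ ε := le_trans (abs_nonneg _) (hmod x hx x hx (by simp [hδ0.le]))
  have hphi : phi f δ x = (f m - f (m - δ)) / δ := rfl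
  have hxm : |x - m| ≤ δ := by
    rw [abs_le]
    constructor
    · have : m ≤ x + δ := max_le (by linarith [hδ0.le]) (by linarith [hx.1])
      linarith
    · have : x ≤ m := le_max_left _ _
      linarith
  have hfxm : |f x - f m| ≤ ε := hmod _ hx _ hmI hxm
  have hphiabs : |phi f δ x| ≤ ε / δ := phi_bound hδ0 hδ1 hmod hx
  -- Claim: f y - f m ≤ phi f δ x * (y - m) + 2 * ε
  have claimC : f y - f m ≤ phi f δ x * (y - m) + 2 * ε := by
    rcases le_or_gt m y with hy1 | hy1
    · rcases eq_or_lt_of_le hy1 with rfl | hy1'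
      · simp; linarith
      · -- y > m : slope(m, y) ≤ phi
        have hs := slope_anti hf hmδI hmI hmI hy
          (by linarith) hy1' (by linarith) hy1
        rw [show m - (m - δ) = δ by ring] at hs
        have hym : 0 < y - m := by linarith
        have := (div_le_iff₀ hym).1 hs
        rw [hphi]
        linarith
    · rcases le_or_gt y (m - δ) with hy2 | hy2
      · rcases eq_or_lt_of_le hy2 with rfl | hy2'
        · -- y = m - δ : equality
          rw [hphi]
          have : (f m - f (m - δ)) / δ * (m - δ - m) = -(f m - f (m - δ)) := by
            field_simp; ring
          rw [this]; linarith
        · -- y < m - δ : slope(y, m) ≥ phi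
          have hs := slope_anti hf hy hmI hmδI hmI (show y < m by linarith) (by linarith)
            hy2'.le le_rfl
          rw [show m - (m - δ) = δ by ring] at hs
          have hmy : 0 < m - y := by linarith
          have h' := (le_div_iff₀ hmy).1 hs
          rw [hphi]
          have e : (f m - f (m - δ)) / δ * (y - m) = -((f m - f (m - δ)) / δ * (m - y)) := by ring
          rw [e]
          linarith
      · -- m - δ < y < m
        have hym : |y - m| ≤ δ := by rw [abs_le]; constructor <;> linarith
        have h1 : |f y - f m| ≤ ε := hmod _ hy _ hmI hym
        have h2 : |phi f δ x * (y - m)| ≤ ε := by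
          rw [abs_mul]
          calc |phi f δ x| * |y - m| ≤ (ε / δ) * δ := by
                apply mul_le_mul hphiabs (by rw [abs_le]; constructor <;> linarith) (abs_nonneg _)
                  (by positivity)
            _ = ε := by field_simp
        have := abs_le.1 h1
        have := abs_le.1 h2
        linarith
  -- assemble
  have h1 : f m ≤ f x + ε := by have := abs_le.1 hfxm; linarith
  have h2 : |phi f δ x * (x - m)| ≤ ε := by
    rw [abs_mul]
    calc |phi f δ x| * |x - m| ≤ (ε / δ) * δ :=
          mul_le_mul hphiabs hxm (abs_nonneg _) (by positivity)
      _ = ε := by field_simp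
  have h2' := abs_le.1 h2
  have e : phi f δ x * (y - m) = phi f δ x * (y - x) + phi f δ x * (x - m) := by ring
  linarith [claimC, h2'.1, h2'.2]

open intervalIntegral in
lemma lemA (ψ h : ℝ → ℝ) (hψ : MonotoneOn ψ (Set.Icc (0:ℝ) 1))
    (hint : MeasureTheory.IntegrableOn (fun u => ψ u * h u) (Set.Icc (0:ℝ) 1))
    (hhint : MeasureTheory.IntegrableOn h (Set.Icc (0:ℝ) 1))
    (hhb : ∀ u ∈ Set.Icc (0:ℝ) 1, |h u| ≤ 1)
    (hH : ∀ t ∈ Set.Icc (0:ℝ) 1, 0 ≤ ∫ u in (0:ℝ)..t, h u)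
    (hH1 : (∫ u in (0:ℝ)..1, h u) = 0) :
    (∫ u in (0:ℝ)..1, ψ u * h u) ≤ 0 := by
  have key : ∀ n : ℕ, 1 ≤ n → (∫ u in (0:ℝ)..1, ψ u * h u) ≤ (ψ 1 - ψ 0) / n := by
    intro n hn
    have hn0 : (0:ℝ) < n := by exact_mod_cast hn
    set a : ℕ → ℝ := fun k => (k : ℝ) / n with ha
    have hamem : ∀ k, k ≤ n → a k ∈ Set.Icc (0:ℝ) 1 := by
      intro k hk
      refine ⟨by positivity, ?_⟩
      rw [div_le_one hn0]; exact_mod_cast hk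
    have hastep : ∀ k : ℕ, a (k+1) - a k = 1 / n := by
      intro k; simp only [ha]; push_cast; ring
    have hamono : ∀ j k : ℕ, j ≤ k → a j ≤ a k := by
      intro j k hjk
      apply div_le_div_of_nonneg_right ?_ hn0.le
      exact_mod_cast hjk
    have hsub : ∀ k, k < n → Set.uIcc (a k) (a (k+1)) ⊆ Set.Icc (0:ℝ) 1 := by
      intro k hk
      rw [Set.uIcc_of_le (hamono k (k+1) (Nat.le_succ k))]
      exact Set.Icc_subset_Icc (hamem k hk.le).1 (hamem (k+1) hk).2
    have hsub0 : ∀ k, k ≤ n → Set.uIcc (0:ℝ) (a k) ⊆ Set.Icc (0:ℝ) 1 := by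
      intro k hk
      rw [Set.uIcc_of_le (hamem k hk).1]
      exact Set.Icc_subset_Icc le_rfl (hamem k hk).2
    have hii : ∀ k, k < n → IntervalIntegrable (fun u => ψ u * h u) MeasureTheory.volume (a k) (a (k+1)) :=
      fun k hk => (hint.mono_set (hsub k hk)).intervalIntegrable
    have hiih : ∀ k, k < n → IntervalIntegrable h MeasureTheory.volume (a k) (a (k+1)) :=
      fun k hk => (hhint.mono_set (hsub k hk)).intervalIntegrable
    have hiih0 : ∀ k, k ≤ n → IntervalIntegrable h MeasureTheory.volume 0 (a k) :=
      fun k hk => (hhint.mono_set (hsub0 k hk)).intervalIntegrable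
    set H : ℕ → ℝ := fun k => ∫ u in (0:ℝ)..(a k), h u with hHdef
    have hHstep : ∀ k, k < n → (∫ u in (a k)..(a (k+1)), h u) = H (k+1) - H k := by
      intro k hk
      have := integral_add_adjacent_intervals (hiih0 k hk.le) (hiih k hk)
      simp only [hHdef]
      linarith [this]
    have piece : ∀ k, k < n → (∫ u in (a k)..(a (k+1)), ψ u * h u)
        ≤ ψ (a (k+1)) * (H (k+1) - H k) + (ψ (a (k+1)) - ψ (a k)) * (1 / n) := by
      intro k hk
      have hle : a k ≤ a (k+1) := hamono k (k+1) (Nat.le_succ k)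
      have hmemk := hamem k hk.le
      have hmemk1 := hamem (k+1) hk
      have hb1 : ∀ u ∈ Set.Icc (a k) (a (k+1)),
          ψ u * h u ≤ ψ (a (k+1)) * h u + (ψ (a (k+1)) - ψ (a k)) := by
        intro u hu
        have hu' : u ∈ Set.Icc (0:ℝ) 1 := ⟨le_trans hmemk.1 hu.1, le_trans hu.2 hmemk1.2⟩
        have h1 : ψ (a k) ≤ ψ u := hψ hmemk hu' hu.1
        have h2 : ψ u ≤ ψ (a (k+1)) := hψ hu' hmemk1 hu.2
        have h3 := abs_le.1 (hhb u hu')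
        nlinarith [h3.1, h3.2]
      have int1 : IntervalIntegrable (fun u => ψ (a (k+1)) * h u + (ψ (a (k+1)) - ψ (a k)))
          MeasureTheory.volume (a k) (a (k+1)) :=
        ((hiih k hk).const_mul _).add intervalIntegrable_const
      have hmono := integral_mono_on hle (hii k hk) int1 hb1
      have heval : (∫ u in (a k)..(a (k+1)), (ψ (a (k+1)) * h u + (ψ (a (k+1)) - ψ (a k))))
          = ψ (a (k+1)) * (H (k+1) - H k) + (ψ (a (k+1)) - ψ (a k)) * (1 / n) := by
        rw [integral_add ((hiih k hk).const_mul _) intervalIntegrable_const,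
          intervalIntegral.integral_const_mul, intervalIntegral.integral_const, hHstep k hk, smul_eq_mul,
          hastep k]
        ring
      rw [heval] at hmono
      exact hmono
    have sum_eq : ∑ k ∈ Finset.range n, (∫ u in (a k)..(a (k+1)), ψ u * h u)
        = ∫ u in (0:ℝ)..1, ψ u * h u := by
      have := sum_integral_adjacent_intervals hii
      have ha0 : a 0 = 0 := by simp [ha]
      have han : a n = 1 := by show (n:ℝ) / n = 1; exact div_self hn0.ne'
      rw [ha0, han] at this
      exact this
    have hHn : H n = 0 := by
      have han : a n = 1 := by show (n:ℝ) / n = 1; exact div_self hn0.ne'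
      simp only [hHdef, han, hH1]
    have hH0 : H 0 = 0 := by simp [hHdef, ha]
    have hHpos : ∀ k, k ≤ n → 0 ≤ H k := fun k hk => hH (a k) (hamem k hk)
    have habel : ∀ m, m ≤ n → ∑ k ∈ Finset.range m, ψ (a (k+1)) * (H (k+1) - H k)
        ≤ ψ (a m) * H m := by
      intro m hm
      induction m with
      | zero => simp [hH0]
      | succ m ih =>
        have hm' : m ≤ n := Nat.le_of_succ_le hm
        rw [Finset.sum_range_succ]
        have h1 := ih hm'
        have h2 : ψ (a m) ≤ ψ (a (m+1)) :=
          hψ (hamem m hm') (hamem (m+1) hm) (hamono m (m+1) (Nat.le_succ m))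
        have h3 : 0 ≤ H m := hHpos m hm'
        nlinarith
    have tele : ∑ k ∈ Finset.range n, (ψ (a (k+1)) - ψ (a k)) = ψ (a n) - ψ (a 0) :=
      Finset.sum_range_sub (fun k => ψ (a k)) n
    have sum_le : ∑ k ∈ Finset.range n, (∫ u in (a k)..(a (k+1)), ψ u * h u)
        ≤ ∑ k ∈ Finset.range n, (ψ (a (k+1)) * (H (k+1) - H k) + (ψ (a (k+1)) - ψ (a k)) * (1 / n)) :=
      Finset.sum_le_sum (fun k hk => piece k (Finset.mem_range.1 hk))
    rw [Finset.sum_add_distrib, ← Finset.sum_mul, tele] at sum_le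
    have ha0 : a 0 = 0 := by simp [ha]
    have han : a n = 1 := by show (n:ℝ) / n = 1; exact div_self hn0.ne'
    rw [sum_eq, ha0, han] at sum_le
    have := habel n le_rfl
    rw [hHn] at this
    calc (∫ u in (0:ℝ)..1, ψ u * h u)
        ≤ ∑ k ∈ Finset.range n, ψ (a (k+1)) * (H (k+1) - H k) + (ψ 1 - ψ 0) * (1 / n) := sum_le
      _ ≤ ψ (a n) * 0 + (ψ 1 - ψ 0) * (1 / n) := by linarith
      _ = (ψ 1 - ψ 0) / n := by ring
  have h0 : 0 ≤ ψ 1 - ψ 0 := sub_nonneg.2 (hψ (Set.left_mem_Icc.2 zero_le_one)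
    (Set.right_mem_Icc.2 zero_le_one) zero_le_one)
  have htend := tendsto_const_div_atTop_nhds_zero_nat (ψ 1 - ψ 0)
  exact ge_of_tendsto htend (Filter.eventually_atTop.2 ⟨1, fun n hn => key n hn⟩)

end Stmt11Aux

open Stmt11Aux Set MeasureTheory intervalIntegral


/-- Lemma on worst-case rearrangement: if `f` is continuous and concave on
`[0,1]`, and `g, ĝ : [0,1] → [0,1]` are non-increasing with
`∫₀¹ g = ∫₀¹ ĝ` and `∫₀^t g ≥ ∫₀^t ĝ` for all `t ∈ [0,1]`, then
`∫₀¹ f∘g ≤ ∫₀¹ f∘ĝ`. -/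
theorem stmt11 (f g ghat : ℝ → ℝ)
    (hfc : ContinuousOn f (Set.Icc (0:ℝ) 1))
    (hfconc : ConcaveOn ℝ (Set.Icc (0:ℝ) 1) f)
    (hgmem : ∀ u ∈ Set.Icc (0:ℝ) 1, g u ∈ Set.Icc (0:ℝ) 1)
    (hghatmem : ∀ u ∈ Set.Icc (0:ℝ) 1, ghat u ∈ Set.Icc (0:ℝ) 1)
    (hgmono : AntitoneOn g (Set.Icc (0:ℝ) 1))
    (hghatmono : AntitoneOn ghat (Set.Icc (0:ℝ) 1))
    (heq : (∫ u in (0:ℝ)..1, g u) = ∫ u in (0:ℝ)..1, ghat u)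
    (hdom : ∀ t ∈ Set.Icc (0:ℝ) 1, (∫ u in (0:ℝ)..t, ghat u) ≤ ∫ u in (0:ℝ)..t, g u) :
    (∫ u in (0:ℝ)..1, f (g u)) ≤ ∫ u in (0:ℝ)..1, f (ghat u) := by
  -- basic integrability facts
  have hIcc : Set.uIcc (0:ℝ) 1 = Set.Icc (0:ℝ) 1 := Set.uIcc_of_le zero_le_one
  have hvol : MeasureTheory.volume (Set.Icc (0:ℝ) 1) < ⊤ := measure_Icc_lt_top
  have hgint : MeasureTheory.IntegrableOn g (Set.Icc (0:ℝ) 1) :=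
    AntitoneOn.integrableOn_isCompact isCompact_Icc hgmono
  have hghatint : MeasureTheory.IntegrableOn ghat (Set.Icc (0:ℝ) 1) :=
    AntitoneOn.integrableOn_isCompact isCompact_Icc hghatmono
  have hgae : AEMeasurable g (MeasureTheory.volume.restrict (Set.Icc (0:ℝ) 1)) :=
    aemeasurable_restrict_of_antitoneOn measurableSet_Icc hgmono
  have hghatae : AEMeasurable ghat (MeasureTheory.volume.restrict (Set.Icc (0:ℝ) 1)) :=
    aemeasurable_restrict_of_antitoneOn measurableSet_Icc hghatmono
  -- continuous extension of f
  set proj : ℝ → ℝ := fun t => max 0 (min 1 t) with hprojdef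
  have hproj_cont : Continuous proj := continuous_const.max (continuous_const.min continuous_id)
  have hproj_mem : ∀ t, proj t ∈ Set.Icc (0:ℝ) 1 :=
    fun t => ⟨le_max_left _ _, max_le zero_le_one (min_le_left _ _)⟩
  have hproj_id : ∀ t ∈ Set.Icc (0:ℝ) 1, proj t = t := by
    intro t ht
    simp only [hprojdef, min_eq_right ht.2, max_eq_right ht.1]
  have hF : Continuous (f ∘ proj) := hfc.comp_continuous hproj_cont hproj_mem
  obtain ⟨M, hM⟩ := isCompact_Icc.exists_bound_of_continuousOn hfc
  -- integrability of f ∘ g and f ∘ ghat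
  have hcomp : ∀ (k : ℝ → ℝ), AEMeasurable k (MeasureTheory.volume.restrict (Set.Icc (0:ℝ) 1)) →
      (∀ u ∈ Set.Icc (0:ℝ) 1, k u ∈ Set.Icc (0:ℝ) 1) →
      MeasureTheory.IntegrableOn (fun u => f (k u)) (Set.Icc (0:ℝ) 1) := by
    intro k hkae hkmem
    have h1 : AEMeasurable (fun u => (f ∘ proj) (k u))
        (MeasureTheory.volume.restrict (Set.Icc (0:ℝ) 1)) :=
      hF.measurable.comp_aemeasurable hkae
    have h2 : AEMeasurable (fun u => f (k u))
        (MeasureTheory.volume.restrict (Set.Icc (0:ℝ) 1)) := by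
      apply h1.congr
      filter_upwards [MeasureTheory.ae_restrict_mem measurableSet_Icc] with u hu
      simp only [Function.comp_apply, hproj_id _ (hkmem u hu)]
    refine MeasureTheory.Integrable.mono' (g := fun _ => M)
      (MeasureTheory.integrableOn_const hvol.ne) h2.aestronglyMeasurable ?_
    filter_upwards [MeasureTheory.ae_restrict_mem measurableSet_Icc] with u hu
    exact hM _ (hkmem u hu)
  have hfgint := hcomp g hgae hgmem
  have hfghatint := hcomp ghat hghatae hghatmem
  have hfgii : IntervalIntegrable (fun u => f (g u)) MeasureTheory.volume 0 1 := by
    apply MeasureTheory.IntegrableOn.intervalIntegrable; rwa [hIcc]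
  have hfghatii : IntervalIntegrable (fun u => f (ghat u)) MeasureTheory.volume 0 1 := by
    apply MeasureTheory.IntegrableOn.intervalIntegrable; rwa [hIcc]
  -- main estimate : for every ε > 0 the inequality holds up to ε
  have main : ∀ ε : ℝ, 0 < ε →
      (∫ u in (0:ℝ)..1, f (g u)) ≤ (∫ u in (0:ℝ)..1, f (ghat u)) + ε := by
    intro ε hε
    -- uniform continuity
    have hunif := isCompact_Icc.uniformContinuousOn_of_continuous hfc
    rw [Metric.uniformContinuousOn_iff_le] at hunif
    obtain ⟨δ₁, hδ₁, hδspec⟩ := hunif (ε/4) (by positivity)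
    set δ : ℝ := min δ₁ 1 with hδdef
    have hδ0 : 0 < δ := lt_min hδ₁ zero_lt_one
    have hδ1 : δ ≤ 1 := min_le_right _ _
    have hmod : ∀ p ∈ Set.Icc (0:ℝ) 1, ∀ q ∈ Set.Icc (0:ℝ) 1, |p - q| ≤ δ →
        |f p - f q| ≤ ε/4 := by
      intro p hp q hq hpq
      have := hδspec p hp q hq (by rw [Real.dist_eq]; exact le_trans hpq (min_le_left _ _))
      rwa [Real.dist_eq] at this
    set ψ : ℝ → ℝ := fun u => phi f δ (ghat u) with hψdef
    set hh : ℝ → ℝ := fun u => g u - ghat u with hhdef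
    have hψmono : MonotoneOn ψ (Set.Icc (0:ℝ) 1) := by
      intro u hu v hv huv
      exact phi_anti hfconc hδ0 hδ1 (hghatmem v hv) (hghatmem u hu) (hghatmono hu hv huv)
    have hψae : AEMeasurable ψ (MeasureTheory.volume.restrict (Set.Icc (0:ℝ) 1)) :=
      aemeasurable_restrict_of_monotoneOn measurableSet_Icc hψmono
    have hhint : MeasureTheory.IntegrableOn hh (Set.Icc (0:ℝ) 1) := hgint.sub hghatint
    have hhb : ∀ u ∈ Set.Icc (0:ℝ) 1, |hh u| ≤ 1 := by
      intro u hu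
      have h1 := hgmem u hu
      have h2 := hghatmem u hu
      rw [hhdef, abs_le]
      constructor <;> simp only <;> [linarith [h1.1, h2.2]; linarith [h1.2, h2.1]]
    have hψb : ∀ u ∈ Set.Icc (0:ℝ) 1, |ψ u| ≤ (ε/4) / δ :=
      fun u hu => phi_bound hδ0 hδ1 hmod (hghatmem u hu)
    have hψhint : MeasureTheory.IntegrableOn (fun u => ψ u * hh u) (Set.Icc (0:ℝ) 1) := by
      refine MeasureTheory.Integrable.mono' (g := fun _ => (ε/4)/δ)
        (MeasureTheory.integrableOn_const hvol.ne)
        (hψae.mul (hgae.sub hghatae)).aestronglyMeasurable ?_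
      filter_upwards [MeasureTheory.ae_restrict_mem measurableSet_Icc] with u hu
      rw [Real.norm_eq_abs, abs_mul]
      calc |ψ u| * |hh u| ≤ ((ε/4)/δ) * 1 :=
            mul_le_mul (hψb u hu) (hhb u hu) (abs_nonneg _) (by positivity)
        _ = (ε/4)/δ := mul_one _
    -- interval integrability of subpieces
    have hgii : ∀ t ∈ Set.Icc (0:ℝ) 1, IntervalIntegrable g MeasureTheory.volume 0 t := by
      intro t ht
      apply MeasureTheory.IntegrableOn.intervalIntegrable
      apply hgint.mono_set
      rw [Set.uIcc_of_le ht.1]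
      exact Set.Icc_subset_Icc le_rfl ht.2
    have hghatii : ∀ t ∈ Set.Icc (0:ℝ) 1, IntervalIntegrable ghat MeasureTheory.volume 0 t := by
      intro t ht
      apply MeasureTheory.IntegrableOn.intervalIntegrable
      apply hghatint.mono_set
      rw [Set.uIcc_of_le ht.1]
      exact Set.Icc_subset_Icc le_rfl ht.2
    have hmem01 : (1:ℝ) ∈ Set.Icc (0:ℝ) 1 := Set.right_mem_Icc.2 zero_le_one
    have hH : ∀ t ∈ Set.Icc (0:ℝ) 1, 0 ≤ ∫ u in (0:ℝ)..t, hh u := by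
      intro t ht
      rw [hhdef]
      rw [intervalIntegral.integral_sub (hgii t ht) (hghatii t ht)]
      have := hdom t ht
      linarith
    have hH1 : (∫ u in (0:ℝ)..1, hh u) = 0 := by
      rw [hhdef, intervalIntegral.integral_sub (hgii 1 hmem01) (hghatii 1 hmem01)]
      rw [heq]; ring
    have hψh_le := lemA ψ hh hψmono hψhint hhint hhb hH hH1
    -- pointwise inequality
    have hpoint : ∀ u ∈ Set.Icc (0:ℝ) 1,
        f (g u) ≤ f (ghat u) + (ψ u * hh u + 4 * (ε/4)) := by
      intro u hu
      have := phi_spec hfconc hδ0 hδ1 hmod (hghatmem u hu) (hgmem u hu)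
      simp only [hψdef, hhdef]
      linarith
    have hψhii : IntervalIntegrable (fun u => ψ u * hh u) MeasureTheory.volume 0 1 := by
      apply MeasureTheory.IntegrableOn.intervalIntegrable; rwa [hIcc]
    have hrhsii : IntervalIntegrable (fun u => f (ghat u) + (ψ u * hh u + 4 * (ε/4)))
        MeasureTheory.volume 0 1 :=
      hfghatii.add (hψhii.add intervalIntegrable_const)
    have hmono := intervalIntegral.integral_mono_on zero_le_one hfgii hrhsii hpoint
    rw [intervalIntegral.integral_add hfghatii (hψhii.add intervalIntegrable_const),
      intervalIntegral.integral_add hψhii intervalIntegrable_const,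
      intervalIntegral.integral_const, smul_eq_mul] at hmono
    calc (∫ u in (0:ℝ)..1, f (g u))
        ≤ (∫ u in (0:ℝ)..1, f (ghat u)) + ((∫ u in (0:ℝ)..1, ψ u * hh u)
            + (1 - 0) * (4 * (ε/4))) := hmono
      _ ≤ (∫ u in (0:ℝ)..1, f (ghat u)) + ε := by linarith
  by_contra hcon
  push_neg at hcon
  have := main (((∫ u in (0:ℝ)..1, f (g u)) - (∫ u in (0:ℝ)..1, f (ghat u))) / 2) (by linarith)
  linarith


end
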